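/- arXiv:1703.01777 — 4 statements merged into one kernel-verified Lean document; each statement's English description precedes it below -/
import Mathlib

section
/- Let y = (y_α)_{|α| ≤ 2d} be a truncated moment sequence with y_0 = 1 and suppose the one-dimensional marginal moments satisfy L_y(x_i^{2d}) ≤ M for all i = 1,…,n, for some M ≥ 1, and that M_d(y) is positive semidefinite. Then |y_α| ≤ M for all |α| ≤ 2d. -/
open MeasureTheory Real Matrix
open scoped BigOperators ENNReal

/-- Multi-indices in `n` variables of total degree at most `d`. -/
def Idx (n d : ℕ) : Type := {α : Fin n → Fin (d+1) // ∑ i, (α i : ℕ) ≤ d}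

instance (n d : ℕ) : Fintype (Idx n d) := by unfold Idx; infer_instance
instance (n d : ℕ) : DecidableEq (Idx n d) := by unfold Idx; infer_instance

/-- The multi-index (exponent vector) associated with an element of `Idx n d`. -/
def toMI {n d : ℕ} (A : Idx n d) : Fin n → ℕ := fun i => (A.1 i : ℕ)

/-- The monomial `x^α`. -/
noncomputable def mono {n : ℕ} (x : Fin n → ℝ) (α : Fin n → ℕ) : ℝ := ∏ i, x i ^ α i

/-- The moment matrix of order `d` of a (pseudo-)moment sequence `y`. -/
noncomputable def momMat (n d : ℕ) (y : (Fin n → ℕ) → ℝ) : Matrix (Idx n d) (Idx n d) ℝ :=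
  Matrix.of fun α β => y (toMI α + toMI β)

/-- The vector of monomials of degree at most `d`. -/
noncomputable def vd (n d : ℕ) (x : Fin n → ℝ) : Idx n d → ℝ := fun α => mono x (toMI α)

open scoped MatrixOrder in
lemma psd_exists_B {I : Type*} [Fintype I] [DecidableEq I] {A : Matrix I I ℝ}
    (hA : A.PosSemidef) : ∃ B : Matrix I I ℝ, A = Bᴴ * B := by
  obtain ⟨X, hX, -, hXX⟩ :=
    CFC.exists_sqrt_of_isSelfAdjoint_of_quasispectrumRestricts hA.isHermitian
      (QuasispectrumRestricts.nnreal_of_nonneg hA.nonneg)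
  exact ⟨X, by rw [← hXX, ← Matrix.star_eq_conjTranspose, hX.star_eq]⟩

lemma psd_diag_nonneg {I : Type*} [Fintype I] [DecidableEq I] {A : Matrix I I ℝ}
    (hA : A.PosSemidef) (a : I) : 0 ≤ A a a := by
  obtain ⟨B, rfl⟩ := psd_exists_B hA
  simp only [Matrix.mul_apply, Matrix.conjTranspose_apply, star_trivial]
  exact Finset.sum_nonneg fun k _ => mul_self_nonneg _

lemma psd_cs {I : Type*} [Fintype I] [DecidableEq I] {A : Matrix I I ℝ}
    (hA : A.PosSemidef) (a b : I) : (A a b)^2 ≤ A a a * A b b := by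
  obtain ⟨B, rfl⟩ := psd_exists_B hA
  simp only [Matrix.mul_apply, Matrix.conjTranspose_apply, star_trivial]
  simpa [sq] using Finset.sum_mul_sq_le_sq_mul_sq Finset.univ (fun k => B k a) (fun k => B k b)

/-- Build an `Idx` from a multi-index of total degree at most `d`. -/
def mkIdx {n d : ℕ} (β : Fin n → ℕ) (hs : ∑ i, β i ≤ d) : Idx n d :=
  ⟨fun i => ⟨β i, Nat.lt_succ_of_le ((Finset.single_le_sum
      (fun i _ => Nat.zero_le (β i)) (Finset.mem_univ i)).trans hs)⟩, by simpa using hs⟩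

lemma toMI_mkIdx {n d : ℕ} (β : Fin n → ℕ) (hs : ∑ i, β i ≤ d) : toMI (mkIdx β hs) = β := rfl

lemma nat_sum_sq_le {n : ℕ} (f : Fin n → ℕ) :
    ∑ i, f i * f i ≤ (∑ i, f i) * (∑ i, f i) := by
  calc ∑ i, f i * f i ≤ ∑ i, f i * (∑ j, f j) :=
        Finset.sum_le_sum fun i _ => Nat.mul_le_mul_left _
          (Finset.single_le_sum (fun i _ => Nat.zero_le (f i)) (Finset.mem_univ i))
    _ = (∑ i, f i) * (∑ i, f i) := by rw [← Finset.sum_mul]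

/-- Lasserre–Netzer bound: if `y` is a truncated sequence of order `2d` with `y₀ = 1`,
`L_y(xᵢ^{2d}) ≤ M` for all `i` and some `M ≥ 1`, and `M_d(y) ⪰ 0`, then `|y_α| ≤ M` for
all `|α| ≤ 2d`. -/
theorem lasserre_netzer_bound (n d : ℕ) (M : ℝ) (hM : 1 ≤ M)
    (y : (Fin n → ℕ) → ℝ) (hy0 : y 0 = 1)
    (hdiag : ∀ i : Fin n, y (fun j => if j = i then 2 * d else 0) ≤ M)
    (hpsd : (momMat n d y).PosSemidef) :
    ∀ α : Fin n → ℕ, (∑ i, α i) ≤ 2 * d → |y α| ≤ M := by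
  -- Cauchy–Schwarz and diagonal nonnegativity for the truncated moment sequence
  have cs : ∀ β1 β2 : Fin n → ℕ, ∑ i, β1 i ≤ d → ∑ i, β2 i ≤ d →
      (y (β1 + β2))^2 ≤ y (β1 + β1) * y (β2 + β2) := by
    intro β1 β2 h1 h2
    exact psd_cs hpsd (mkIdx β1 h1) (mkIdx β2 h2)
  have diag0 : ∀ β : Fin n → ℕ, ∑ i, β i ≤ d → 0 ≤ y (β + β) := by
    intro β h
    exact psd_diag_nonneg hpsd (mkIdx β h)
  -- the maximum of the diagonal entries
  have hzero : (∑ i : Fin n, (0:ℕ)) ≤ d := by simp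
  have hne : (Finset.univ : Finset (Idx n d)).Nonempty := ⟨mkIdx 0 hzero, Finset.mem_univ _⟩
  set g : Idx n d → ℝ := fun A => y (toMI A + toMI A) with hg
  set τ : ℝ := Finset.univ.sup' hne g with hτ
  have hle : ∀ β : Fin n → ℕ, ∑ i, β i ≤ d → y (β + β) ≤ τ := by
    intro β h
    exact Finset.le_sup' g (Finset.mem_univ (mkIdx β h))
  have hτ1 : 1 ≤ τ := by
    have := hle 0 hzero
    simpa [hy0] using this
  -- sum over erase
  have hsplit : ∀ (i : Fin n) (f : Fin n → ℕ),
      ∑ k, f k = f i + ∑ k ∈ Finset.univ.erase i, f k :=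
    fun i f => (Finset.add_sum_erase _ f (Finset.mem_univ i)).symm
  have pbound : ∀ β : Fin n → ℕ, ∑ i, β i ≤ d →
      d * (∑ i, β i) + (∑ i, β i * β i) ≤ 2*d*d := by
    intro β h
    have h1 : d * (∑ i, β i) ≤ d * d := Nat.mul_le_mul_left _ h
    have h2 : (∑ i, β i * β i) ≤ d * d := (nat_sum_sq_le β).trans (Nat.mul_le_mul h h)
    calc d * (∑ i, β i) + (∑ i, β i * β i) ≤ d * d + d * d := Nat.add_le_add h1 h2
      _ = 2*d*d := by ring
  -- Key climbing induction: any maximizer value is ≤ M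
  have key : ∀ m : ℕ, ∀ β : Fin n → ℕ, (hβ : ∑ i, β i ≤ d) →
      2*d*d - (d * (∑ i, β i) + ∑ i, β i * β i) = m → y (β + β) = τ → τ ≤ M := by
    intro m
    induction m using Nat.strong_induction_on with
    | _ m ih =>
      intro β hβ hm hmax
      by_cases hb0 : β = 0
      · subst hb0
        have : (1:ℝ) ≤ M := hM
        have h0 : y ((0:Fin n → ℕ) + 0) = y 0 := by norm_num
        rw [h0, hy0] at hmax
        linarith [hmax]
      · obtain ⟨i, hi⟩ : ∃ i, β i ≠ 0 := by
          by_contra h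
          push_neg at h
          exact hb0 (funext fun i => h i)
        have hi1 : 1 ≤ β i := Nat.one_le_iff_ne_zero.mpr hi
        by_cases hsd : (∑ k, β k) < d
        · -- grow along coordinate i
          set β' : Fin n → ℕ := fun k => if k = i then β k + 1 else β k with hβ'
          set β'' : Fin n → ℕ := fun k => if k = i then β k - 1 else β k with hβ''
          have hE : ∀ (f f' : Fin n → ℕ), (∀ k, k ≠ i → f k = f' k) →
              ∑ k ∈ Finset.univ.erase i, f k = ∑ k ∈ Finset.univ.erase i, f' k :=
            fun f f' h => Finset.sum_congr rfl fun k hk => h k (Finset.ne_of_mem_erase hk)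
          set S := ∑ k ∈ Finset.univ.erase i, β k with hS
          set SQ := ∑ k ∈ Finset.univ.erase i, β k * β k with hSQ
          have hβS : ∑ k, β k = β i + S := hsplit i β
          have hβSQ : ∑ k, β k * β k = β i * β i + SQ := hsplit i (fun k => β k * β k)
          have hβ'S : ∑ k, β' k = (β i + 1) + S := by
            rw [hsplit i β']
            simp only [hβ', if_pos rfl]
            rw [hE β' β (fun k hk => by simp [hβ', hk])]
          have hβ'SQ : ∑ k, β' k * β' k = (β i + 1) * (β i + 1) + SQ := by
            rw [hsplit i (fun k => β' k * β' k)]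
            simp only [hβ', if_pos rfl]
            rw [hE (fun k => β' k * β' k) (fun k => β k * β k) (fun k hk => by simp [hβ', hk])]
          have hsum' : ∑ k, β' k ≤ d := by omega
          have hsum'' : ∑ k, β'' k ≤ d := by
            have : ∀ k, β'' k ≤ β k := by intro k; simp only [hβ'']; split <;> omega
            exact (Finset.sum_le_sum fun k _ => this k).trans hβ
          have hdecomp : β'' + β' = β + β := by
            funext k
            simp only [Pi.add_apply, hβ', hβ'']
            by_cases h : k = i <;> simp [h] <;> omega
          have hcs := cs β'' β' hsum'' hsum'
          rw [hdecomp, hmax] at hcs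
          have h1 : y (β'' + β'') ≤ τ := hle _ hsum''
          have h2 : y (β' + β') ≤ τ := hle _ hsum'
          have h3 : 0 ≤ y (β' + β') := diag0 _ hsum'
          have h4 : 0 ≤ y (β'' + β'') := diag0 _ hsum''
          have hmax' : y (β' + β') = τ := by nlinarith
          -- measure decreases
          have hplt : d * (∑ k, β k) + (∑ k, β k * β k)
              < d * (∑ k, β' k) + (∑ k, β' k * β' k) := by
            rw [hβS, hβSQ, hβ'S, hβ'SQ]
            have e1 : (β i + 1) * (β i + 1) = β i * β i + 2 * β i + 1 := by ring
            have e2 : d * (β i + 1 + S) = d * (β i + S) + d := by ring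
            omega
          have hpb := pbound β' hsum'
          exact ih _ (hm ▸ Nat.sub_lt_sub_left (lt_of_lt_of_le hplt hpb) hplt) β' hsum' rfl hmax'
        · -- total degree is exactly d
          have hsd' : ∑ k, β k = d := le_antisymm hβ (not_lt.mp hsd)
          by_cases hpure : ∀ j, j ≠ i → β j = 0
          · -- pure power: τ = y(x_i^{2d}) ≤ M
            have hScalc : β i = d := by
              have := hsplit i β
              have hz : ∑ k ∈ Finset.univ.erase i, β k = 0 :=
                Finset.sum_eq_zero fun k hk => hpure k (Finset.ne_of_mem_erase hk)
              omega
            have hβeq : (β + β) = (fun j => if j = i then 2*d else 0) := by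
              funext j
              by_cases h : j = i
              · subst h; simp [hScalc]; omega
              · simp [h, hpure j h]
            rw [← hmax, hβeq]
            exact hdiag i
          · push_neg at hpure
            obtain ⟨j, hji, hj⟩ := hpure
            have hj1 : 1 ≤ β j := Nat.one_le_iff_ne_zero.mpr hj
            have step2 : ∀ a b : Fin n, a ≠ b → 1 ≤ β b → β b ≤ β a → τ ≤ M := by
              intro a b hab hb1 hba
              set β' : Fin n → ℕ := fun k => if k = a then β k + 1 else
                if k = b then β k - 1 else β k with hβ'
              set β'' : Fin n → ℕ := fun k => if k = a then β k - 1 else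
                if k = b then β k + 1 else β k with hβ''
              set E := (Finset.univ.erase a).erase b with hEdef
              have hsplit2 : ∀ f : Fin n → ℕ, ∑ k, f k = f a + f b + ∑ k ∈ E, f k := by
                intro f
                have hbmem : b ∈ Finset.univ.erase a :=
                  Finset.mem_erase.mpr ⟨Ne.symm hab, Finset.mem_univ b⟩
                rw [hEdef, hsplit a f, ← Finset.add_sum_erase _ f hbmem, add_assoc]
              have hE : ∀ (f f' : Fin n → ℕ), (∀ k, k ≠ a → k ≠ b → f k = f' k) →
                  ∑ k ∈ E, f k = ∑ k ∈ E, f' k := by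
                intro f f' h
                refine Finset.sum_congr rfl fun k hk => ?_
                have hk' := Finset.mem_erase.mp hk
                exact h k (Finset.ne_of_mem_erase hk'.2) hk'.1
              set S := ∑ k ∈ E, β k with hS
              set SQ := ∑ k ∈ E, β k * β k with hSQ
              have hβS : ∑ k, β k = β a + β b + S := hsplit2 β
              have hβSQ : ∑ k, β k * β k = β a * β a + β b * β b + SQ :=
                hsplit2 (fun k => β k * β k)
              have hb'a : β' a = β a + 1 := by simp [hβ']
              have hb'b : β' b = β b - 1 := by simp [hβ', hab, (Ne.symm hab)]
              have hb''a : β'' a = β a - 1 := by simp [hβ'']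
              have hb''b : β'' b = β b + 1 := by simp [hβ'', hab, (Ne.symm hab)]
              have hβ'S : ∑ k, β' k = (β a + 1) + (β b - 1) + S := by
                rw [hsplit2 β', hb'a, hb'b,
                  hE β' β (fun k h1 h2 => by simp [hβ', h1, h2])]
              have hβ'SQ : ∑ k, β' k * β' k
                  = (β a + 1) * (β a + 1) + (β b - 1) * (β b - 1) + SQ := by
                rw [hsplit2 (fun k => β' k * β' k), hb'a, hb'b,
                  hE (fun k => β' k * β' k) (fun k => β k * β k)
                    (fun k h1 h2 => by simp [hβ', h1, h2])]
              have hβ''S : ∑ k, β'' k = (β a - 1) + (β b + 1) + S := by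
                rw [hsplit2 β'', hb''a, hb''b,
                  hE β'' β (fun k h1 h2 => by simp [hβ'', h1, h2])]
              have hsum' : ∑ k, β' k ≤ d := by omega
              have hsum'' : ∑ k, β'' k ≤ d := by omega
              have hdecomp : β'' + β' = β + β := by
                funext k
                simp only [Pi.add_apply, hβ', hβ'']
                by_cases h1 : k = a
                · subst h1; rw [if_pos rfl, if_pos rfl]; omega
                · by_cases h2 : k = b
                  · subst h2; rw [if_neg h1, if_neg h1, if_pos rfl, if_pos rfl]; omega
                  · simp [h1, h2]
              have hcs := cs β'' β' hsum'' hsum'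
              rw [hdecomp, hmax] at hcs
              have h1 : y (β'' + β'') ≤ τ := hle _ hsum''
              have h2 : y (β' + β') ≤ τ := hle _ hsum'
              have h3 : 0 ≤ y (β' + β') := diag0 _ hsum'
              have h4 : 0 ≤ y (β'' + β'') := diag0 _ hsum''
              have hmax' : y (β' + β') = τ := by nlinarith
              have hplt : d * (∑ k, β k) + (∑ k, β k * β k)
                  < d * (∑ k, β' k) + (∑ k, β' k * β' k) := by
                obtain ⟨c, hc⟩ : ∃ c, β b = c + 1 := ⟨β b - 1, by omega⟩
                have hca : c + 1 ≤ β a := hc ▸ hba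
                rw [hβS, hβSQ, hβ'S, hβ'SQ, hc]
                simp only [Nat.add_sub_cancel]
                have heq : d * (β a + (c + 1) + S) = d * (β a + 1 + c + S) := by
                  rw [show β a + (c + 1) + S = β a + 1 + c + S by omega]
                rw [heq]
                have e1 : (β a + 1) * (β a + 1) = β a * β a + 2 * β a + 1 := by ring
                have e2 : (c + 1) * (c + 1) = c * c + 2 * c + 1 := by ring
                omega
              have hpb := pbound β' hsum'
              exact ih _ (hm ▸ Nat.sub_lt_sub_left (lt_of_lt_of_le hplt hpb) hplt)
                β' hsum' rfl hmax'
            rcases le_total (β j) (β i) with hij | hij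
            · exact step2 i j (fun h => hji h.symm) hj1 hij
            · exact step2 j i hji hi1 hij
  -- conclude τ ≤ M from a maximizer
  obtain ⟨A0, -, hA0⟩ := Finset.exists_mem_eq_sup' hne g
  have hA0sum : ∑ k, toMI A0 k ≤ d := A0.2
  have hτM : τ ≤ M := key _ (toMI A0) hA0sum rfl hA0.symm
  have diagM : ∀ β : Fin n → ℕ, ∑ i, β i ≤ d → y (β + β) ≤ M :=
    fun β h => (hle β h).trans hτM
  -- split α into two halves and apply Cauchy–Schwarz
  intro α hα
  classical
  set a : ℕ → ℕ := fun k => if h : k < n then α ⟨k, h⟩ else 0 with ha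
  set G : ℕ → ℕ := fun k => min (∑ j ∈ Finset.range k, a j) d with hG
  have hGmono : Monotone G := by
    intro p q hpq
    exact min_le_min (Finset.sum_le_sum_of_subset (Finset.range_subset_range.mpr hpq)) le_rfl
  set β1 : Fin n → ℕ := fun j => G (j + 1) - G j with hβ1
  have haj : ∀ j : Fin n, a (j : ℕ) = α j := by
    intro j; simp [ha, j.isLt]
  have hβ1le : ∀ j : Fin n, β1 j ≤ α j := by
    intro j
    have h1 : G ((j:ℕ) + 1) ≤ G (j:ℕ) + a (j:ℕ) := by
      simp only [hG, Finset.sum_range_succ]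
      omega
    have := haj j
    simp only [hβ1]
    omega
  set β2 : Fin n → ℕ := fun j => α j - β1 j with hβ2
  have hadd : α = β1 + β2 := by
    funext j
    have := hβ1le j
    simp only [Pi.add_apply, hβ2]
    omega
  have hsum1 : ∑ j, β1 j = G n := by
    have : ∑ j : Fin n, β1 j = ∑ k ∈ Finset.range n, (G (k+1) - G k) := by
      rw [← Fin.sum_univ_eq_sum_range (fun k => G (k+1) - G k) n]
    rw [this, Finset.sum_range_tsub hGmono]
    simp [hG]
  have hαa : ∑ j, α j = ∑ k ∈ Finset.range n, a k := by
    rw [← Fin.sum_univ_eq_sum_range a n]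
    exact Finset.sum_congr rfl fun j _ => (haj j).symm
  have hGn : G n = min (∑ j, α j) d := by rw [hG, hαa]
  have hs1 : ∑ j, β1 j ≤ d := by rw [hsum1, hGn]; exact min_le_right _ _
  have hs12 : ∑ j, β1 j + ∑ j, β2 j = ∑ j, α j := by
    rw [← Finset.sum_add_distrib]
    exact Finset.sum_congr rfl fun j _ => by
      have := hβ1le j; simp only [hβ2]; omega
  have hs2 : ∑ j, β2 j ≤ d := by
    have h1 : ∑ j, β1 j = min (∑ j, α j) d := by rw [hsum1, hGn]
    omega
  have hcs := cs β1 β2 hs1 hs2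
  rw [← hadd] at hcs
  have hm1 : y (β1 + β1) ≤ M := diagM _ hs1
  have hm2 : y (β2 + β2) ≤ M := diagM _ hs2
  have hn1 : 0 ≤ y (β1 + β1) := diag0 _ hs1
  have hn2 : 0 ≤ y (β2 + β2) := diag0 _ hs2
  have h0 : (0:ℝ) ≤ M := le_trans zero_le_one hM
  rw [pow_two] at hcs
  have hsq : y α * y α ≤ M * M :=
    hcs.trans (mul_le_mul hm1 hm2 hn2 h0)
  by_contra hcon
  push_neg at hcon
  have h2 : M * M < |y α| * |y α| := mul_self_lt_mul_self h0 hcon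
  have h3 : |y α| * |y α| = y α * y α := abs_mul_abs_self (y α)
  linarith
end

section
/- Let X ⊆ R^n be compact with nonempty interior and let y* be the unique optimizer of max { log det M_d(y) : y ∈ M_{2d}(X), y_0 = 1 } with Christoffel polynomial p*_d(x) = v_d(x)^T M_d(y*)^{-1} v_d(x). Then p*_d(x) ≤ binom(n+d,n) for all x ∈ X, and any representing measure μ* of y* on X is supported on the set {x ∈ X : p*_d(x) = binom(n+d,n)}. -/
open MeasureTheory Real Matrix
open scoped BigOperators ENNReal

/-- The truncated moment cone: sequences that agree, up to degree `k`, with the moments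
of some finite nonnegative Borel measure supported on `X`. -/
def momCone (n k : ℕ) (X : Set (Fin n → ℝ)) : Set ((Fin n → ℕ) → ℝ) :=
  {y | ∃ μ : Measure (Fin n → ℝ), IsFiniteMeasure μ ∧ μ Xᶜ = 0 ∧
        ∀ α : Fin n → ℕ, (∑ i, α i) ≤ k → y α = ∫ x, mono x α ∂μ}

/-- The support of a measure: the set of points all of whose neighborhoods have
nonzero measure. -/
def msupport {X : Type*} [TopologicalSpace X] [MeasurableSpace X] (μ : Measure X) :
    Set X :=
  {x | ∀ U ∈ nhds x, μ U ≠ 0}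

/-! ### Auxiliary lemmas -/

noncomputable def idxEquiv (n d : ℕ) : Idx n d ≃ {f : Fin (n+1) → ℕ // ∑ i, f i = d} where
  toFun A := ⟨Fin.cons (d - ∑ i, (A.1 i : ℕ)) (fun i => (A.1 i : ℕ)), by
    rw [Fin.sum_cons]; exact Nat.sub_add_cancel A.2⟩
  invFun := fun ⟨f, hf⟩ => ⟨fun i => ⟨f i.succ, by
      rw [Fin.sum_univ_succ] at hf
      have h2 : f i.succ ≤ ∑ j : Fin n, f j.succ :=
        Finset.single_le_sum (f := fun j : Fin n => f j.succ) (fun _ _ => Nat.zero_le _)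
          (Finset.mem_univ i)
      omega⟩, by
    rw [Fin.sum_univ_succ] at hf
    simp only []
    omega⟩
  left_inv A := by
    apply Subtype.ext; funext i
    apply Fin.ext; simp
  right_inv f := by
    apply Subtype.ext; funext i
    rcases Fin.eq_zero_or_eq_succ i with h | ⟨j, rfl⟩
    · subst h
      simp only [Fin.cons_zero]
      have := f.2
      rw [Fin.sum_univ_succ] at this
      omega
    · simp

theorem card_Idx (n d : ℕ) : Fintype.card (Idx n d) = (n + d).choose n := by
  have e2 : {f : Fin (n+1) → ℕ // ∑ i, f i = d} ≃
      (Finset.piAntidiag (Finset.univ : Finset (Fin (n+1))) d : Finset (Fin (n+1) → ℕ)) :=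
    Equiv.subtypeEquivRight (by intro f; simp [Finset.mem_piAntidiag])
  rw [Fintype.card_congr ((idxEquiv n d).trans e2), Fintype.card_coe,
    ← Finset.map_sym_eq_piAntidiag, Finset.card_map, Finset.sym_univ, Finset.card_univ,
    Sym.card_sym_eq_choose]
  simp only [Fintype.card_fin]
  have h : n + 1 + d - 1 = n + d := by omega
  rw [h]
  simpa [Nat.add_sub_cancel_left] using (Nat.choose_symm (show n ≤ n + d by omega))

lemma mono_add {n : ℕ} (x : Fin n → ℝ) (a b : Fin n → ℕ) :
    mono x (a + b) = mono x a * mono x b := by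
  unfold mono
  rw [← Finset.prod_mul_distrib]
  exact Finset.prod_congr rfl fun i _ => by simp [pow_add]

lemma mono_zero {n : ℕ} (x : Fin n → ℝ) : mono x 0 = 1 := by simp [mono]

lemma cont_mono {n : ℕ} (α : Fin n → ℕ) : Continuous fun x : Fin n → ℝ => mono x α := by
  unfold mono
  exact continuous_finset_prod _ fun i _ => (continuous_apply i).pow _

lemma slope_le_zero {c : ℝ} (hc : 0 < c) (P : Polynomial ℝ) (a : ℝ)
    (h : ∀ t : ℝ, t ∈ Set.Ioc (0:ℝ) 1 → c * (1 + a * t + P.eval t * t^2) ≤ c) : a ≤ 0 := by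
  have key : ∀ t ∈ Set.Ioc (0:ℝ) 1, a ≤ -(P.eval t * t) := by
    intro t ht
    have h2 := h t ht
    have h3 : 1 + a * t + P.eval t * t^2 ≤ 1 := by
      have h2' : c * (1 + a * t + P.eval t * t^2) ≤ c * 1 := by simpa [mul_one] using h2
      exact le_of_mul_le_mul_left h2' hc
    have h4 : a * t ≤ -(P.eval t * t) * t := by nlinarith
    exact le_of_mul_le_mul_right (by linarith [h4]) ht.1
  have hev : ∀ᶠ t in nhdsWithin (0:ℝ) (Set.Ioi 0), a ≤ -(P.eval t * t) := by
    filter_upwards [Ioc_mem_nhdsGT_of_mem (by constructor <;> norm_num : (0:ℝ) ∈ Set.Ico (0:ℝ) 1)]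
      with t ht using key t ht
  have hcont : Continuous fun t : ℝ => -(P.eval t * t) :=
    ((P.continuous_aeval).mul continuous_id).neg
  have hlim : Filter.Tendsto (fun t : ℝ => -(P.eval t * t)) (nhdsWithin (0:ℝ) (Set.Ioi 0))
      (nhds 0) := by
    have := (hcont.tendsto 0).mono_left (nhdsWithin_le_nhds (s := Set.Ioi (0:ℝ)))
    simpa using this
  exact ge_of_tendsto hlim hev

lemma trace_mul_outer {ι : Type*} [Fintype ι] [DecidableEq ι] (A : Matrix ι ι ℝ) (v : ι → ℝ) :
    Matrix.trace (A * Matrix.of fun α β => v α * v β) = v ⬝ᵥ (A *ᵥ v) := by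
  simp only [Matrix.trace, Matrix.diag, Matrix.mul_apply, Matrix.of_apply, dotProduct,
    Matrix.mulVec, Finset.mul_sum]
  exact Finset.sum_congr rfl fun i _ => Finset.sum_congr rfl fun j _ => by ring

lemma integrable_of_compact' {n : ℕ} {X : Set (Fin n → ℝ)} (hX : IsCompact X)
    {μ : Measure (Fin n → ℝ)} (hfin : IsFiniteMeasure μ) (hc : μ Xᶜ = 0)
    {f : (Fin n → ℝ) → ℝ} (hf : Continuous f) : Integrable f μ := by
  obtain ⟨C, hC⟩ := hX.exists_bound_of_continuousOn hf.continuousOn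
  have hae : ∀ᵐ z ∂μ, z ∈ X := by
    rw [MeasureTheory.ae_iff]; exact hc
  exact (integrable_const C).mono' hf.aestronglyMeasurable
    (by filter_upwards [hae] with z hz using hC z hz)

lemma mix_mem {n : ℕ} (k : ℕ) {X : Set (Fin n → ℝ)} (hX : IsCompact X)
    {ystar : (Fin n → ℕ) → ℝ} (hmem : ystar ∈ momCone n k X) {x : Fin n → ℝ} (hx : x ∈ X)
    {t : ℝ} (ht : t ∈ Set.Ioc (0:ℝ) 1) :
    (fun γ => (1-t) * ystar γ + t * mono x γ) ∈ momCone n k X := by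
  obtain ⟨μ, hfin, hXc, hrep⟩ := hmem
  set ν : Measure (Fin n → ℝ) :=
    ENNReal.ofReal (1-t) • μ + ENNReal.ofReal t • Measure.dirac x with hν
  have hXm : MeasurableSet X := hX.isClosed.measurableSet
  have hdX : Measure.dirac x Xᶜ = 0 := by
    rw [Measure.dirac_apply' x hXm.compl]
    simp [hx]
  have hνX : ν Xᶜ = 0 := by
    simp [hν, Measure.add_apply, Measure.smul_apply, hXc, hdX]
  have hνfin : IsFiniteMeasure ν := by
    constructor
    rw [hν]
    simp only [Measure.add_apply, Measure.smul_apply, smul_eq_mul]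
    have h1 : ENNReal.ofReal (1-t) * μ Set.univ < ⊤ :=
      ENNReal.mul_lt_top ENNReal.ofReal_lt_top (measure_lt_top μ _)
    have h2 : ENNReal.ofReal t * Measure.dirac x Set.univ < ⊤ :=
      ENNReal.mul_lt_top ENNReal.ofReal_lt_top (measure_lt_top _ _)
    exact ENNReal.add_lt_top.mpr ⟨h1, h2⟩
  refine ⟨ν, hνfin, hνX, ?_⟩
  intro α hα
  have hcont := cont_mono (n := n) α
  have hdd : IsFiniteMeasure (ENNReal.ofReal t • Measure.dirac x) := by
    constructor
    simp only [Measure.smul_apply, smul_eq_mul]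
    exact ENNReal.mul_lt_top ENNReal.ofReal_lt_top (measure_lt_top _ _)
  have hmm : IsFiniteMeasure (ENNReal.ofReal (1-t) • μ) := by
    constructor
    simp only [Measure.smul_apply, smul_eq_mul]
    exact ENNReal.mul_lt_top ENNReal.ofReal_lt_top (measure_lt_top _ _)
  have hint1 : Integrable (fun z => mono z α) (ENNReal.ofReal (1-t) • μ) :=
    integrable_of_compact' hX hmm (by simp [Measure.smul_apply, hXc]) hcont
  have hint2 : Integrable (fun z => mono z α) (ENNReal.ofReal t • Measure.dirac x) :=
    integrable_of_compact' hX hdd (by simp [Measure.smul_apply, hdX]) hcont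
  rw [hν, integral_add_measure hint1 hint2, integral_smul_measure, integral_smul_measure,
    integral_dirac, ENNReal.toReal_ofReal (by linarith [ht.2]),
    ENNReal.toReal_ofReal (le_of_lt ht.1), ← hrep α hα]
  simp [smul_eq_mul]

/-- If `y*` is the optimizer of the ideal D-optimal design problem on a compact `X` with
nonempty interior, then its Christoffel polynomial `p*_d(x) = v_d(x)ᵀ M_d(y*)⁻¹ v_d(x)`
satisfies `p*_d ≤ binom (n+d) n` on `X`, and every representing measure `μ*` of `y*` on
`X` is supported on `{x ∈ X : p*_d(x) = binom (n+d) n}`. -/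
theorem christoffel_level_set_support (n d : ℕ) (X : Set (Fin n → ℝ))
    (hX : IsCompact X) (hint : (interior X).Nonempty)
    (ystar : (Fin n → ℕ) → ℝ) (hmem : ystar ∈ momCone n (2 * d) X) (h0 : ystar 0 = 1)
    (hPD : (momMat n d ystar).PosDef)
    (hopt : ∀ y ∈ momCone n (2 * d) X, y 0 = 1 →
      (momMat n d y).det ≤ (momMat n d ystar).det) :
    (∀ x ∈ X, vd n d x ⬝ᵥ ((momMat n d ystar)⁻¹ *ᵥ vd n d x) ≤ (n + d).choose n) ∧
    (∀ μ : Measure (Fin n → ℝ), IsFiniteMeasure μ → μ Xᶜ = 0 →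
      (∀ α : Fin n → ℕ, (∑ i, α i) ≤ 2 * d → ystar α = ∫ x, mono x α ∂μ) →
      msupport μ ⊆
        {x ∈ X | vd n d x ⬝ᵥ ((momMat n d ystar)⁻¹ *ᵥ vd n d x) = (n + d).choose n}) := by
  set M : Matrix (Idx n d) (Idx n d) ℝ := momMat n d ystar with hM
  have hdet : IsUnit M.det := isUnit_iff_ne_zero.mpr (ne_of_gt hPD.det_pos)
  -- Part 1
  have part1 : ∀ x ∈ X, vd n d x ⬝ᵥ (M⁻¹ *ᵥ vd n d x) ≤ ((n + d).choose n : ℝ) := by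
    intro x hx
    set v : Idx n d → ℝ := vd n d x with hv
    set Mx : Matrix (Idx n d) (Idx n d) ℝ := Matrix.of fun α β => v α * v β with hMx
    set B : Matrix (Idx n d) (Idx n d) ℝ := M⁻¹ * (Mx - M) with hB
    set Q : Polynomial ℝ :=
      (Matrix.det (1 + (Polynomial.X : Polynomial ℝ) • B.map Polynomial.C)).divX.divX with hQ
    have key : ∀ t ∈ Set.Ioc (0:ℝ) 1,
        M.det * (1 + Matrix.trace B * t + Q.eval t * t^2) ≤ M.det := by
      intro t ht
      have hyt := mix_mem (2*d) hX hmem hx ht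
      have hyt0 : (fun γ => (1-t) * ystar γ + t * mono x γ) 0 = 1 := by
        show (1-t) * ystar 0 + t * mono x 0 = 1
        rw [h0, mono_zero]
        ring
      have hle := hopt _ hyt hyt0
      have hmm : momMat n d (fun γ => (1-t) * ystar γ + t * mono x γ) = M * (1 + t • B) := by
        have h1 : M * (1 + t • B) = M + t • (Mx - M) := by
          rw [mul_add, mul_one, mul_smul_comm, hB, ← Matrix.mul_assoc,
            Matrix.mul_nonsing_inv _ hdet, Matrix.one_mul]
        rw [h1]
        ext α β
        simp only [momMat, Matrix.of_apply, Matrix.add_apply, Matrix.smul_apply,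
          Matrix.sub_apply, smul_eq_mul, hM, hMx, hv, vd]
        rw [mono_add]
        ring
      rw [hmm, Matrix.det_mul, Matrix.det_one_add_smul] at hle
      calc M.det * (1 + Matrix.trace B * t + Q.eval t * t^2)
          = M.det * (1 + Matrix.trace B * t + Polynomial.eval t
            (Matrix.det (1 + (Polynomial.X : Polynomial ℝ) • B.map Polynomial.C)).divX.divX
              * t ^ 2) := by rw [hQ]
        _ ≤ M.det := hle
    have htr : Matrix.trace B ≤ 0 := slope_le_zero hPD.det_pos Q _ key
    have hBtr : Matrix.trace B = v ⬝ᵥ (M⁻¹ *ᵥ v) - ((n + d).choose n : ℝ) := by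
      rw [hB, Matrix.mul_sub, Matrix.trace_sub, hMx, trace_mul_outer,
        Matrix.nonsing_inv_mul _ hdet, Matrix.trace_one, card_Idx]
    rw [hBtr] at htr
    linarith
  refine ⟨part1, ?_⟩
  -- Part 2
  intro μ hfin hXc hrep
  haveI := hfin
  set N : ℝ := ((n + d).choose n : ℝ) with hN
  set p : (Fin n → ℝ) → ℝ := fun z => vd n d z ⬝ᵥ (M⁻¹ *ᵥ vd n d z) with hp
  have hpeq : p = fun z => ∑ α : Idx n d, ∑ β : Idx n d,
      M⁻¹ α β * (mono z (toMI α) * mono z (toMI β)) := by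
    funext z
    simp only [hp, dotProduct, Matrix.mulVec, Finset.mul_sum, vd]
    exact Finset.sum_congr rfl fun α _ => Finset.sum_congr rfl fun β _ => by ring
  have hpcont : Continuous p := by
    rw [hpeq]
    exact continuous_finset_sum _ fun α _ => continuous_finset_sum _ fun β _ =>
      continuous_const.mul ((cont_mono _).mul (cont_mono _))
  have hint_term : ∀ (a b : Fin n → ℕ), Integrable (fun z => mono z a * mono z b) μ :=
    fun a b => integrable_of_compact' hX hfin hXc ((cont_mono _).mul (cont_mono _))
  have hIp : Integrable p μ := by
    rw [hpeq]
    exact integrable_finset_sum _ fun α _ => integrable_finset_sum _ fun β _ =>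
      (hint_term _ _).const_mul _
  have hμuniv : (μ Set.univ).toReal = 1 := by
    have h := hrep 0 (by simp)
    rw [h0] at h
    simp only [mono_zero] at h
    rw [integral_const] at h
    exact (by simpa [smul_eq_mul] using h.symm : μ.real Set.univ = 1)
  have hmoment : ∀ α β : Idx n d,
      ∫ z, mono z (toMI α) * mono z (toMI β) ∂μ = M α β := by
    intro α β
    have hdeg : (∑ i, (toMI α + toMI β) i) ≤ 2 * d := by
      have h1 : (∑ i, toMI α i) ≤ d := α.2
      have h2 : (∑ i, toMI β i) ≤ d := β.2
      simp only [Pi.add_apply, Finset.sum_add_distrib]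
      omega
    have := hrep _ hdeg
    rw [show (fun z : Fin n → ℝ => mono z (toMI α) * mono z (toMI β))
        = fun z => mono z (toMI α + toMI β) from funext fun z => (mono_add z _ _).symm]
    rw [← this]
    simp [hM, momMat]
  have hintp : ∫ z, p z ∂μ = N := by
    rw [hpeq]
    beta_reduce
    rw [integral_finset_sum (f := fun (α : Idx n d) (z : Fin n → ℝ) => ∑ β : Idx n d,
      M⁻¹ α β * (mono z (toMI α) * mono z (toMI β))) _ (fun α _ => integrable_finset_sum _ fun β _ =>
      (hint_term _ _).const_mul _)]
    have : ∀ α : Idx n d, ∫ z, (∑ β : Idx n d,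
        M⁻¹ α β * (mono z (toMI α) * mono z (toMI β))) ∂μ
        = ∑ β : Idx n d, M⁻¹ α β * M α β := by
      intro α
      rw [integral_finset_sum _ (fun β _ => (hint_term _ _).const_mul _)]
      exact Finset.sum_congr rfl fun β _ => by rw [integral_const_mul, hmoment]
    rw [Finset.sum_congr rfl fun α _ => this α]
    have htr : ∑ α : Idx n d, ∑ β : Idx n d, M⁻¹ α β * M α β = Matrix.trace (M⁻¹ * M) := by
      simp only [Matrix.trace, Matrix.diag, Matrix.mul_apply]
      refine Finset.sum_congr rfl fun α _ => Finset.sum_congr rfl fun β _ => ?_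
      have : M β α = M α β := by
        simp only [hM, momMat, Matrix.of_apply]
        rw [add_comm]
      rw [this]
    rw [htr, Matrix.nonsing_inv_mul _ hdet, Matrix.trace_one, hN, card_Idx]
  have hf0 : ∫ z, (N - p z) ∂μ = 0 := by
    rw [integral_sub (integrable_const N) hIp, integral_const, measureReal_def, hμuniv, hintp]
    simp
  have haeX : ∀ᵐ z ∂μ, z ∈ X := by
    rw [MeasureTheory.ae_iff]; exact hXc
  have hnn : 0 ≤ᵐ[μ] fun z => N - p z := by
    filter_upwards [haeX] with z hz
    have := part1 z hz
    simp only [Pi.zero_apply]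
    rw [hN]
    linarith [this]
  have hae0 : (fun z => N - p z) =ᵐ[μ] 0 :=
    (integral_eq_zero_iff_of_nonneg_ae hnn ((integrable_const N).sub hIp)).mp hf0
  have hnull : μ {z | p z ≠ N} = 0 := by
    have h := hae0
    rw [Filter.EventuallyEq, MeasureTheory.ae_iff] at h
    have hss : {z | p z ≠ N} = {z | ¬ (N - p z = (0 : (Fin n → ℝ) → ℝ) z)} := by
      ext z
      simp [sub_eq_zero, eq_comm]
    rw [hss]
    exact h
  intro x₀ hx₀
  by_contra hcon
  have hUopen : IsOpen ({z | p z ≠ N} ∪ Xᶜ) := by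
    apply IsOpen.union
    · have : {z | p z ≠ N} = (p ⁻¹' {N})ᶜ := by ext z; simp
      rw [this]
      exact (isClosed_singleton.preimage hpcont).isOpen_compl
    · exact hX.isClosed.isOpen_compl
  have hx₀U : x₀ ∈ {z | p z ≠ N} ∪ Xᶜ := by
    simp only [Set.mem_sep_iff] at hcon
    rcases Classical.em (x₀ ∈ X) with hmemX | hmemX
    · left
      intro hpx
      exact hcon ⟨hmemX, hpx⟩
    · right; exact hmemX
  exact hx₀ _ (hUopen.mem_nhds hx₀U) (measure_union_null hnull hXc)
end

section
/- Consider D-optimal design on X = [−1,1] for polynomial regression of degree d = 5 with the full monomial basis (1, x, …, x^5). The probability measure assigning equal weight 1/6 to the points ±1 and the four critical points of the Legendre polynomial of degree 5 in (−1,1) maximizes det M_5(μ) := det(∫ v_5(x) v_5(x)^T dμ) over all probability measures μ on [−1,1]. -/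
open MeasureTheory Real Matrix
open scoped BigOperators ENNReal

/-- The 6×6 information (moment) matrix `∫ v₅(x) v₅(x)ᵀ dμ` for univariate polynomial
regression of degree 5, with `v₅(x) = (1, x, x², x³, x⁴, x⁵)ᵀ`. -/
noncomputable def infoMat5 (μ : Measure ℝ) : Matrix (Fin 6) (Fin 6) ℝ :=
  Matrix.of fun i j => ∫ x, x ^ ((i : ℕ) + (j : ℕ)) ∂μ

/-- The Legendre polynomial of degree 5. -/
noncomputable def legendre5 : ℝ → ℝ := fun x => (63 * x ^ 5 - 70 * x ^ 3 + 15 * x) / 8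

/- ### Auxiliary lemmas -/

lemma aux_legendre5_deriv (x : ℝ) : deriv legendre5 x = (315*x^4 - 210*x^2 + 15)/8 := by
  have h1 : HasDerivAt (fun x : ℝ => 63*x^5 - 70*x^3 + 15*x) (315*x^4 - 210*x^2 + 15) x := by
    have := (((hasDerivAt_pow 5 x).const_mul (63:ℝ)).sub
      ((hasDerivAt_pow 3 x).const_mul (70:ℝ))).add ((hasDerivAt_id x).const_mul (15:ℝ))
    exact this.congr_deriv (by push_cast; ring)
  have h : HasDerivAt legendre5 ((315*x^4 - 210*x^2 + 15)/8) x := by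
    exact h1.div_const 8
  exact h.deriv

lemma aux_trace_eq_sum_eig {A : Matrix (Fin 6) (Fin 6) ℝ} (hA : A.IsHermitian) :
    A.trace = ∑ i, hA.eigenvalues i := by
  rw [hA.trace_eq_sum_eigenvalues]
  simp

lemma aux_det_eq_prod_eig {A : Matrix (Fin 6) (Fin 6) ℝ} (hA : A.IsHermitian) :
    A.det = ∏ i, hA.eigenvalues i := by
  rw [hA.det_eq_prod_eigenvalues]; norm_num

lemma aux_det_pos_of_psd {B : Matrix (Fin 6) (Fin 6) ℝ} (hB : B.PosSemidef) (hd : B.det ≠ 0) :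
    0 < B.det := by
  have h1 : B.det = ∏ i, hB.1.eigenvalues i := aux_det_eq_prod_eig hB.1
  have h2 : 0 ≤ ∏ i, hB.1.eigenvalues i :=
    Finset.prod_nonneg (fun i _ => hB.eigenvalues_nonneg i)
  rw [h1] at hd ⊢
  exact lt_of_le_of_ne h2 (Ne.symm hd)

open scoped MatrixOrder in
/-- Key inequality: for PSD `A` and PSD invertible `B`, `det A ≤ det B` whenever
`trace (B⁻¹ A) ≤ 6`. -/
lemma aux_det_le_of_trace_le {A B : Matrix (Fin 6) (Fin 6) ℝ} (hA : A.PosSemidef)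
    (hB : B.PosSemidef) (hBdet : B.det ≠ 0) (h : (B⁻¹ * A).trace ≤ 6) : A.det ≤ B.det := by
  have hdetB : 0 < B.det := aux_det_pos_of_psd hB hBdet
  set S := CFC.sqrt B with hSdef
  have hS : S.PosSemidef := (CFC.sqrt_nonneg B).posSemidef
  have hSS : S * S = B := CFC.sqrt_mul_sqrt_self B hB.nonneg
  have hds : S.det * S.det = B.det := by rw [← Matrix.det_mul, hSS]
  have hdetS : S.det ≠ 0 := by
    intro h0
    rw [h0, mul_zero] at hds
    exact hBdet hds.symm
  have hSinvH : (S⁻¹).IsHermitian := hS.1.inv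
  set C := S⁻¹ * A * S⁻¹ with hCdef
  have hC : C.PosSemidef := by
    have := hA.mul_mul_conjTranspose_same S⁻¹
    have hT : S⁻¹ᴴ = S⁻¹ := hSinvH.eq
    rwa [hT] at this
  have hCH : C.IsHermitian := hC.1
  have hdetC : C.det = ∏ i, hCH.eigenvalues i := aux_det_eq_prod_eig hCH
  have htrC : C.trace = ∑ i, hCH.eigenvalues i := aux_trace_eq_sum_eig hCH
  have heig : ∀ i, 0 ≤ hCH.eigenvalues i := hC.eigenvalues_nonneg
  have key : C.det ≤ Real.exp (C.trace - 6) := by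
    rw [hdetC, htrC]
    calc ∏ i, hCH.eigenvalues i ≤ ∏ i, Real.exp (hCH.eigenvalues i - 1) := by
          apply Finset.prod_le_prod (fun i _ => heig i)
          intro i _
          have := Real.add_one_le_exp (hCH.eigenvalues i - 1)
          linarith
      _ = Real.exp (∑ i, (hCH.eigenvalues i - 1)) := by rw [← Real.exp_sum]
      _ = Real.exp (∑ i, hCH.eigenvalues i - 6) := by
          congr 1
          rw [Finset.sum_sub_distrib]
          simp
  have hBinv : B⁻¹ = S⁻¹ * S⁻¹ := by rw [← hSS, Matrix.mul_inv_rev]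
  have htr : C.trace = (B⁻¹ * A).trace := by
    rw [hCdef, hBinv, Matrix.trace_mul_cycle]
  have hdC : C.det = A.det / B.det := by
    rw [hCdef, Matrix.det_mul, Matrix.det_mul, Matrix.det_nonsing_inv, Ring.inverse_eq_inv', ← hds]
    field_simp
  have hexp : Real.exp (C.trace - 6) ≤ 1 := by
    rw [htr, Real.exp_le_one_iff]
    linarith
  have hfin : A.det / B.det ≤ 1 := le_trans (hdC ▸ key) hexp
  calc A.det = (A.det / B.det) * B.det := by field_simp
    _ ≤ 1 * B.det := mul_le_mul_of_nonneg_right hfin (le_of_lt hdetB)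
    _ = B.det := one_mul _

lemma aux_integrable_pow_dirac (k : ℕ) (a : ℝ) :
    Integrable (fun x : ℝ => x ^ k) (Measure.dirac a) := by
  have hm : Measurable fun x : ℝ => x ^ k := by fun_prop
  refine ⟨hm.aestronglyMeasurable, ?_⟩
  rw [HasFiniteIntegral, lintegral_dirac' _ hm.enorm]
  exact enorm_lt_top

lemma aux_integrable_pow_of_icc (μ : Measure ℝ) [IsProbabilityMeasure μ]
    (hμ : μ (Set.Icc (-1 : ℝ) 1)ᶜ = 0) (k : ℕ) :
    Integrable (fun x : ℝ => x ^ k) μ := by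
  have hae : ∀ᵐ x ∂μ, x ∈ Set.Icc (-1 : ℝ) 1 := by
    rw [MeasureTheory.ae_iff]; exact hμ
  have hm : Measurable fun x : ℝ => x ^ k := by fun_prop
  refine ⟨hm.aestronglyMeasurable, HasFiniteIntegral.of_bounded (C := 1) ?_⟩
  filter_upwards [hae] with x hx
  rw [Real.norm_eq_abs, abs_pow]
  apply pow_le_one₀ (abs_nonneg x)
  rw [abs_le]; exact ⟨hx.1, hx.2⟩

lemma aux_sq_expand (x : Fin 6 → ℝ) (s : ℝ) :
    ∑ i : Fin 6, ∑ j : Fin 6, (x i * x j) * s ^ ((i:ℕ) + (j:ℕ))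
      = (∑ i : Fin 6, x i * s ^ (i:ℕ)) ^ 2 := by
  rw [sq, Finset.sum_mul_sum]
  apply Finset.sum_congr rfl; intro i _
  apply Finset.sum_congr rfl; intro j _
  rw [pow_add]; ring

lemma aux_infoMat5_posSemidef (μ : Measure ℝ)
    (hint : ∀ k : ℕ, Integrable (fun x : ℝ => x ^ k) μ) :
    (infoMat5 μ).PosSemidef := by
  apply Matrix.PosSemidef.of_dotProduct_mulVec_nonneg
  · ext i j
    simp only [Matrix.conjTranspose_apply, infoMat5, Matrix.of_apply, star_trivial]
    rw [Nat.add_comm]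
  · intro x
    have h1 : star x ⬝ᵥ (infoMat5 μ).mulVec x
        = ∑ i : Fin 6, ∑ j : Fin 6, (x i * x j) * ∫ s, s ^ ((i:ℕ) + (j:ℕ)) ∂μ := by
      simp only [dotProduct, Matrix.mulVec, infoMat5, Matrix.of_apply, star_trivial,
        Finset.mul_sum]
      apply Finset.sum_congr rfl; intro i _
      apply Finset.sum_congr rfl; intro j _
      ring
    rw [h1]
    have h2 : ∀ i j : Fin 6, (x i * x j) * ∫ s, s ^ ((i:ℕ) + (j:ℕ)) ∂μ
        = ∫ s, (x i * x j) * s ^ ((i:ℕ) + (j:ℕ)) ∂μ := by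
      intro i j; rw [MeasureTheory.integral_const_mul]
    simp_rw [h2]
    have h3 : ∀ i : Fin 6, ∑ j : Fin 6, ∫ s, (x i * x j) * s ^ ((i:ℕ)+(j:ℕ)) ∂μ
        = ∫ s, ∑ j : Fin 6, (x i * x j) * s ^ ((i:ℕ)+(j:ℕ)) ∂μ :=
      fun i => (MeasureTheory.integral_finset_sum _ (fun j _ => (hint _).const_mul _)).symm
    simp_rw [h3]
    rw [← MeasureTheory.integral_finset_sum _
      (fun i _ => integrable_finset_sum _ (fun j _ => (hint _).const_mul _))]
    apply MeasureTheory.integral_nonneg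
    intro s
    have h4 := aux_sq_expand x s
    simp only [h4]
    positivity

lemma aux_cons_val_five {α : Type*} {m : ℕ} (x : α) (u : Fin (m+5) → α) :
    Matrix.vecCons x u 5 = Matrix.vecHead (Matrix.vecTail (Matrix.vecTail
      (Matrix.vecTail (Matrix.vecTail u)))) := rfl

/-- The explicit inverse of the optimal information matrix. -/
noncomputable def aux_N : Matrix (Fin 6) (Fin 6) ℝ :=
  !![339/64, 0, -315/16, 0, 945/64, 0;
     0, 3825/64, 0, -1365/8, 0, 7119/64;
     -315/16, 0, 1995/16, 0, -441/4, 0;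
     0, -1365/8, 0, 9261/16, 0, -6615/16;
     945/64, 0, -441/4, 0, 6615/64, 0;
     0, 7119/64, 0, -6615/16, 0, 19845/64]

set_option maxHeartbeats 2000000 in
set_option maxRecDepth 1024 in
/-- D-optimal design on `[-1,1]` for degree-5 polynomial regression: the probability
measure putting mass `1/6` on each of `±1` and the four critical points of the degree-5
Legendre polynomial in `(-1,1)` maximizes `det M₅(μ)` over all probability measures on
`[-1,1]`. -/
theorem d_optimal_design_interval (t : Fin 4 → ℝ) (htinj : Function.Injective t)
    (htmem : ∀ i, t i ∈ Set.Ioo (-1 : ℝ) 1)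
    (hcrit : ∀ i, deriv legendre5 (t i) = 0)
    (μ0 : Measure ℝ)
    (hμ0 : μ0 = (6 : ℝ≥0∞)⁻¹ •
      (Measure.dirac (-1) + Measure.dirac 1 + ∑ i, Measure.dirac (t i))) :
    ∀ μ : Measure ℝ, IsProbabilityMeasure μ → μ (Set.Icc (-1 : ℝ) 1)ᶜ = 0 →
      (infoMat5 μ).det ≤ (infoMat5 μ0).det := by
  intro μ hprob hsupp
  -- quartic equation for the support points
  have hq : ∀ i, 21*(t i)^4 - 14*(t i)^2 + 1 = 0 := by
    intro i
    have h := hcrit i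
    rw [aux_legendre5_deriv] at h
    nlinarith [h]
  -- the four roots
  set c : ℝ := Real.sqrt 7 with hc
  have h7 : c^2 = 7 := Real.sq_sqrt (by norm_num)
  have hcpos : 0 < c := Real.sqrt_pos.mpr (by norm_num)
  have hclt : c < 7/2 := by nlinarith
  set a : ℝ := Real.sqrt ((7+2*c)/21) with hadef
  set b : ℝ := Real.sqrt ((7-2*c)/21) with hbdef
  have ha2 : a^2 = (7+2*c)/21 := Real.sq_sqrt (by positivity)
  have hb2 : b^2 = (7-2*c)/21 := Real.sq_sqrt (by nlinarith)
  have hapos : 0 < a := Real.sqrt_pos.mpr (by positivity)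
  have hbpos : 0 < b := Real.sqrt_pos.mpr (by nlinarith)
  have hba : b < a := by
    nlinarith [ha2, hb2, hapos, hbpos, hcpos]
  -- membership of t i in the root set
  have hmem : ∀ i, t i = a ∨ t i = -a ∨ t i = b ∨ t i = -b := by
    intro i
    have e1 : a^2 + b^2 = 2/3 := by rw [ha2, hb2]; ring
    have e2 : a^2 * b^2 = 1/21 := by rw [ha2, hb2]; field_simp; nlinarith
    have key : ((t i)^2 - a^2) * ((t i)^2 - b^2) = 0 := by
      linear_combination (1/21) * hq i - (t i)^2 * e1 + e2
    rcases mul_eq_zero.mp key with h | h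
    · have : (t i - a) * (t i + a) = 0 := by linear_combination h
      rcases mul_eq_zero.mp this with h' | h'
      · exact Or.inl (by linarith)
      · exact Or.inr (Or.inl (by linarith))
    · have : (t i - b) * (t i + b) = 0 := by linear_combination h
      rcases mul_eq_zero.mp this with h' | h'
      · exact Or.inr (Or.inr (Or.inl (by linarith)))
      · exact Or.inr (Or.inr (Or.inr (by linarith)))
  -- the root set as a Finset
  have hn1 : a ∉ ({-a, b, -b} : Finset ℝ) := by
    simp only [Finset.mem_insert, Finset.mem_singleton]
    push_neg
    refine ⟨by nlinarith, by nlinarith, by nlinarith⟩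
  have hn2 : (-a) ∉ ({b, -b} : Finset ℝ) := by
    simp only [Finset.mem_insert, Finset.mem_singleton]
    push_neg
    refine ⟨by nlinarith, by nlinarith⟩
  have hn3 : b ∉ ({-b} : Finset ℝ) := by
    simp only [Finset.mem_singleton]
    nlinarith
  have hcard : ({a, -a, b, -b} : Finset ℝ).card = 4 := by
    rw [Finset.card_insert_of_notMem hn1, Finset.card_insert_of_notMem hn2,
      Finset.card_insert_of_notMem hn3, Finset.card_singleton]
  have himg : Finset.univ.image t = ({a, -a, b, -b} : Finset ℝ) := by
    apply Finset.eq_of_subset_of_card_le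
    · intro x hx
      rw [Finset.mem_image] at hx
      obtain ⟨i, _, rfl⟩ := hx
      simp only [Finset.mem_insert, Finset.mem_singleton]
      rcases hmem i with h | h | h | h <;> tauto
    · rw [hcard, Finset.card_image_of_injective _ htinj]
      simp
  have hsum : ∀ g : ℝ → ℝ, ∑ i, g (t i) = g a + g (-a) + g b + g (-b) := by
    intro g
    have := Finset.sum_image (f := g) (g := t) (s := Finset.univ)
      (fun x _ y _ (h : t x = t y) => htinj h)
    rw [himg] at this
    rw [← this]
    rw [Finset.sum_insert hn1, Finset.sum_insert hn2, Finset.sum_insert hn3,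
      Finset.sum_singleton]
    ring
  -- moments of μ0
  have hmom : ∀ k : ℕ, ∫ x, x^k ∂μ0
      = 6⁻¹ * (((-1:ℝ))^k + 1 + (a^k + (-a)^k + b^k + (-b)^k)) := by
    intro k
    rw [hμ0, MeasureTheory.integral_smul_measure,
      MeasureTheory.integral_add_measure
        ((aux_integrable_pow_dirac k (-1)).add_measure (aux_integrable_pow_dirac k 1))
        (MeasureTheory.integrable_finset_sum_measure.mpr
          (fun i _ => aux_integrable_pow_dirac k (t i))),
      MeasureTheory.integral_add_measure (aux_integrable_pow_dirac k (-1))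
        (aux_integrable_pow_dirac k 1),
      MeasureTheory.integral_finset_sum_measure
        (fun i _ => aux_integrable_pow_dirac k (t i))]
    simp_rw [MeasureTheory.integral_dirac]
    rw [hsum (fun x => x^k)]
    rw [ENNReal.toReal_inv, smul_eq_mul]
    norm_num
  -- the root power identities
  have hqa : 21*a^4 - 14*a^2 + 1 = 0 := by
    have h4 : a^4 = ((7+2*c)/21)^2 := by rw [← ha2]; ring
    rw [h4, ha2]
    linear_combination (4/21) * h7
  have hqb : 21*b^4 - 14*b^2 + 1 = 0 := by
    have h4 : b^4 = ((7-2*c)/21)^2 := by rw [← hb2]; ring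
    rw [h4, hb2]
    linear_combination (4/21) * h7
  have s2 : a^2 + b^2 = 2/3 := by rw [ha2, hb2]; ring
  have s4 : a^4 + b^4 = 22/63 := by linear_combination (1/21)*hqa + (1/21)*hqb + (14/21)*s2
  have s6 : a^6 + b^6 = 38/189 := by
    linear_combination (a^2/21)*hqa + (b^2/21)*hqb + (14/21)*s4 - (1/21)*s2
  have s8 : a^8 + b^8 = 466/3969 := by
    linear_combination (a^4/21)*hqa + (b^4/21)*hqb + (14/21)*s6 - (1/21)*s4
  have s10 : a^10 + b^10 = 818/11907 := by
    linear_combination (a^6/21)*hqa + (b^6/21)*hqb + (14/21)*s8 - (1/21)*s6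
  -- moments values
  have e0 : ∫ x, x^(0:ℕ) ∂μ0 = 1 := by rw [hmom]; norm_num
  have e1 : ∫ x, x^(1:ℕ) ∂μ0 = 0 := by rw [hmom]; ring
  have e2 : ∫ x, x^(2:ℕ) ∂μ0 = 5/9 := by rw [hmom]; linear_combination (1/3) * s2
  have e3 : ∫ x, x^(3:ℕ) ∂μ0 = 0 := by rw [hmom]; ring
  have e4 : ∫ x, x^(4:ℕ) ∂μ0 = 85/189 := by rw [hmom]; linear_combination (1/3) * s4
  have e5 : ∫ x, x^(5:ℕ) ∂μ0 = 0 := by rw [hmom]; ring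
  have e6 : ∫ x, x^(6:ℕ) ∂μ0 = 227/567 := by rw [hmom]; linear_combination (1/3) * s6
  have e7 : ∫ x, x^(7:ℕ) ∂μ0 = 0 := by rw [hmom]; ring
  have e8 : ∫ x, x^(8:ℕ) ∂μ0 = 4435/11907 := by rw [hmom]; linear_combination (1/3) * s8
  have e9 : ∫ x, x^(9:ℕ) ∂μ0 = 0 := by rw [hmom]; ring
  have e10 : ∫ x, x^(10:ℕ) ∂μ0 = 12725/35721 := by rw [hmom]; linear_combination (1/3) * s10
  -- B * N = 1
  have e0' : μ0.real Set.univ = 1 := by simpa using e0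
  have e1' : ∫ (x : ℝ), x ∂μ0 = 0 := by simpa using e1
  have hBN : infoMat5 μ0 * aux_N = 1 := by
    have hB : infoMat5 μ0 = !![1, 0, 5/9, 0, 85/189, 0;
       0, 5/9, 0, 85/189, 0, 227/567;
       5/9, 0, 85/189, 0, 227/567, 0;
       0, 85/189, 0, 227/567, 0, 4435/11907;
       85/189, 0, 227/567, 0, 4435/11907, 0;
       0, 227/567, 0, 4435/11907, 0, 12725/35721] := by
      ext i j
      fin_cases i <;> fin_cases j <;>
        simp only [infoMat5, Matrix.of_apply, Fin.isValue, Fin.mk_zero, Fin.mk_one] <;>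
        norm_num <;>
        first
          | exact e0' | exact e1' | exact e2 | exact e3 | exact e4 | exact e5
          | exact e6 | exact e7 | exact e8 | exact e9 | exact e10
    rw [hB]
    ext i j
    fin_cases i <;> fin_cases j <;>
      simp [Matrix.mul_apply, Fin.sum_univ_six, aux_N, Matrix.one_apply, aux_cons_val_five] <;>
      norm_num
  -- PSD facts
  have hintμ0 : ∀ k : ℕ, Integrable (fun x : ℝ => x ^ k) μ0 := by
    intro k
    rw [hμ0]
    refine Integrable.smul_measure ?_ (by norm_num)
    exact ((aux_integrable_pow_dirac k (-1)).add_measure (aux_integrable_pow_dirac k 1)).add_measure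
      (MeasureTheory.integrable_finset_sum_measure.mpr (fun i _ => aux_integrable_pow_dirac k (t i)))
  have hBpsd : (infoMat5 μ0).PosSemidef := aux_infoMat5_posSemidef μ0 hintμ0
  have hintμ : ∀ k : ℕ, Integrable (fun x : ℝ => x ^ k) μ := aux_integrable_pow_of_icc μ hsupp
  have hApsd : (infoMat5 μ).PosSemidef := aux_infoMat5_posSemidef μ hintμ
  have hBdet : (infoMat5 μ0).det ≠ 0 := Matrix.det_ne_zero_of_right_inverse hBN
  have hBinv : (infoMat5 μ0)⁻¹ = aux_N := Matrix.inv_eq_right_inv hBN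
  -- trace bound
  have htrace : (aux_N * infoMat5 μ).trace ≤ 6 := by
    have hexp : (aux_N * infoMat5 μ).trace
        = 339/64 * ∫ x, x^(0:ℕ) ∂μ + 1305/64 * ∫ x, x^(2:ℕ) ∂μ
          - 5985/32 * ∫ x, x^(4:ℕ) ∂μ + 18585/32 * ∫ x, x^(6:ℕ) ∂μ
          - 46305/64 * ∫ x, x^(8:ℕ) ∂μ + 19845/64 * ∫ x, x^(10:ℕ) ∂μ := by
      simp [Matrix.trace, Matrix.diag, Matrix.mul_apply, Fin.sum_univ_six, aux_N, infoMat5,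
        aux_cons_val_five, show ((2:Fin 6):ℕ) = 2 from rfl, show ((3:Fin 6):ℕ) = 3 from rfl,
        show ((4:Fin 6):ℕ) = 4 from rfl, show ((5:Fin 6):ℕ) = 5 from rfl]
      ring
    have hIadd : ∫ x, (339/64 * x^(0:ℕ) + 1305/64 * x^(2:ℕ) - 5985/32 * x^(4:ℕ)
          + 18585/32 * x^(6:ℕ) - 46305/64 * x^(8:ℕ) + 19845/64 * x^(10:ℕ)) ∂μ
        = 339/64 * ∫ x, x^(0:ℕ) ∂μ + 1305/64 * ∫ x, x^(2:ℕ) ∂μ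
          - 5985/32 * ∫ x, x^(4:ℕ) ∂μ + 18585/32 * ∫ x, x^(6:ℕ) ∂μ
          - 46305/64 * ∫ x, x^(8:ℕ) ∂μ + 19845/64 * ∫ x, x^(10:ℕ) ∂μ := by
      rw [MeasureTheory.integral_add, MeasureTheory.integral_sub, MeasureTheory.integral_add,
        MeasureTheory.integral_sub, MeasureTheory.integral_add]
      · simp_rw [MeasureTheory.integral_const_mul]
      all_goals
        first
        | exact (hintμ _).const_mul _
        | exact ((hintμ _).const_mul _).add ((hintμ _).const_mul _)
        | exact (((hintμ _).const_mul _).add ((hintμ _).const_mul _)).sub ((hintμ _).const_mul _)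
        | exact ((((hintμ _).const_mul _).add ((hintμ _).const_mul _)).sub
            ((hintμ _).const_mul _)).add ((hintμ _).const_mul _)
        | exact (((((hintμ _).const_mul _).add ((hintμ _).const_mul _)).sub
            ((hintμ _).const_mul _)).add ((hintμ _).const_mul _)).sub ((hintμ _).const_mul _)
    rw [hexp, ← hIadd]
    have hmono : ∫ x, (339/64 * x^(0:ℕ) + 1305/64 * x^(2:ℕ) - 5985/32 * x^(4:ℕ)
          + 18585/32 * x^(6:ℕ) - 46305/64 * x^(8:ℕ) + 19845/64 * x^(10:ℕ)) ∂μ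
        ≤ ∫ _x, (6:ℝ) ∂μ := by
      apply MeasureTheory.integral_mono_ae
      · exact (((((hintμ _).const_mul _).add ((hintμ _).const_mul _)).sub
            ((hintμ _).const_mul _)).add ((hintμ _).const_mul _)).sub ((hintμ _).const_mul _)
          |>.add ((hintμ _).const_mul _)
      · exact MeasureTheory.integrable_const _
      · have hae : ∀ᵐ x ∂μ, x ∈ Set.Icc (-1 : ℝ) 1 := by
          rw [MeasureTheory.ae_iff]; exact hsupp
        filter_upwards [hae] with x hx
        have h1 : 0 ≤ 1 - x^2 := by nlinarith [hx.1, hx.2]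
        nlinarith [mul_nonneg h1 (sq_nonneg (21*x^4 - 14*x^2 + 1))]
    calc _ ≤ ∫ _x, (6:ℝ) ∂μ := hmono
      _ = 6 := by simp
  -- conclude
  apply aux_det_le_of_trace_le hApsd hBpsd hBdet
  rw [hBinv]
  exact htrace
end

section
/- Let S² = {x ∈ R³ : x₁² + x₂² + x₃² = 1} and consider linear regression with regressors Φ(x) = (1, x₁, x₂, x₃). The uniform probability measure on the six points (±1,0,0), (0,±1,0), (0,0,±1) has information matrix M = diag(1, 1/3, 1/3, 1/3), and this measure maximizes det M(μ) over all probability measures μ on S², with optimal value det M = 1/27. -/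
open MeasureTheory Real Matrix
open scoped BigOperators ENNReal

/-- The unit sphere in `ℝ³`. -/
def S2 : Set (Fin 3 → ℝ) := {x | x 0 ^ 2 + x 1 ^ 2 + x 2 ^ 2 = 1}

/-- The regressors `Φ(x) = (1, x₁, x₂, x₃)`. -/
noncomputable def Phi (x : Fin 3 → ℝ) : Fin 4 → ℝ := ![1, x 0, x 1, x 2]

/-- The 4×4 information matrix `∫ Φ(x) Φ(x)ᵀ dμ`. -/
noncomputable def infoMatS2 (μ : Measure (Fin 3 → ℝ)) : Matrix (Fin 4) (Fin 4) ℝ :=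
  Matrix.of fun i j => ∫ x, Phi x i * Phi x j ∂μ

/-! ### Auxiliary lemmas -/

lemma detFinFour (A : Matrix (Fin 4) (Fin 4) ℝ) : A.det =
    A 0 0*A 1 1*A 2 2*A 3 3 - A 0 0*A 1 1*A 2 3*A 3 2 - A 0 0*A 1 2*A 2 1*A 3 3 + A 0 0*A 1 2*A 2 3*A 3 1 + A 0 0*A 1 3*A 2 1*A 3 2 - A 0 0*A 1 3*A 2 2*A 3 1 - A 0 1*A 1 0*A 2 2*A 3 3 + A 0 1*A 1 0*A 2 3*A 3 2 + A 0 1*A 1 2*A 2 0*A 3 3 - A 0 1*A 1 2*A 2 3*A 3 0 - A 0 1*A 1 3*A 2 0*A 3 2 + A 0 1*A 1 3*A 2 2*A 3 0 + A 0 2*A 1 0*A 2 1*A 3 3 - A 0 2*A 1 0*A 2 3*A 3 1 - A 0 2*A 1 1*A 2 0*A 3 3 + A 0 2*A 1 1*A 2 3*A 3 0 + A 0 2*A 1 3*A 2 0*A 3 1 - A 0 2*A 1 3*A 2 1*A 3 0 - A 0 3*A 1 0*A 2 1*A 3 2 + A 0 3*A 1 0*A 2 2*A 3 1 + A 0 3*A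 1 1*A 2 0*A 3 2 - A 0 3*A 1 1*A 2 2*A 3 0 - A 0 3*A 1 2*A 2 0*A 3 1 + A 0 3*A 1 2*A 2 1*A 3 0 := by
  rw [Matrix.det_succ_row_zero]
  simp [Fin.sum_univ_succ, Matrix.det_succ_row_zero, Matrix.submatrix_apply, Fin.succ_ne_zero,
    show (Fin.succ 2 : Fin 4) = 3 from rfl, show (Fin.succAbove (2:Fin 4) 2) = 3 from rfl,
    show (Fin.succAbove (1:Fin 4) 2) = 3 from rfl, show (Fin.castSucc (2:Fin 3)) = 2 from rfl,
    show (Fin.succAbove (3:Fin 4) 2) = 2 from rfl]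
  ring

lemma algBound (A B C D E F dM : ℝ) (ha : 0 ≤ A) (hb : 0 ≤ B) (hc : 0 ≤ C)
    (hd : D^2 ≤ A*B) (he : E^2 ≤ A*C) (hf : F^2 ≤ B*C) (htr : A + B + C ≤ 1)
    (hdet : dM = A*B*C + 2*D*E*F - A*F^2 - B*E^2 - C*D^2) : dM ≤ 1/27 := by
  have habc : A*B*C ≤ 1/27 := by
    nlinarith [sq_nonneg (A-B), sq_nonneg (B-C), sq_nonneg (A-C), mul_nonneg ha hb,
      mul_nonneg hb hc, mul_nonneg ha hc]
  have hS : 0 ≤ A*F^2 + B*E^2 := by positivity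
  have h4 : (2*D*E*F)^2 ≤ (A*F^2 + B*E^2)^2 := by
    nlinarith [sq_nonneg (A*F^2 - B*E^2), mul_nonneg (sq_nonneg (E*F)) (sub_nonneg.2 hd)]
  have h5 : 2*D*E*F ≤ A*F^2 + B*E^2 := by nlinarith [h4, hS]
  nlinarith [mul_nonneg hc (sq_nonneg D)]

set_option maxHeartbeats 1000000 in
/-- det bound for a symmetric PSD matrix with `m 0 0 = 1` and unit trace of lower block. -/
lemma coreDetBound (m : Fin 4 → Fin 4 → ℝ) (hsym : ∀ i j, m i j = m j i)
    (h00 : m 0 0 = 1) (htr : m 1 1 + m 2 2 + m 3 3 = 1)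
    (hq : ∀ v : Fin 4 → ℝ, 0 ≤ ∑ i, ∑ j, v i * v j * m i j) :
    (Matrix.of m).det ≤ 1/27 := by
  set b1 := m 0 1 with hb1
  set b2 := m 0 2 with hb2
  set b3 := m 0 3 with hb3
  have key : ∀ v : Fin 4 → ℝ,
      0 ≤ v 0 * v 0 + (v 0 * (v 1 * b1) + v 0 * (v 2 * b2) + v 0 * (v 3 * b3))
        + (v 1 * (v 0 * b1) + v 2 * (v 0 * b2) + v 3 * (v 0 * b3))
        + (v 1 * v 1 * m 1 1 + v 2 * v 2 * m 2 2 + v 3 * v 3 * m 3 3)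
        + (2 * (v 1 * v 2) * m 1 2 + 2 * (v 1 * v 3) * m 1 3 + 2 * (v 2 * v 3) * m 2 3) := by
    intro v
    have h := hq v
    simp only [Fin.sum_univ_four] at h
    rw [hsym 1 0, hsym 2 0, hsym 3 0, hsym 2 1, hsym 3 1, hsym 3 2, h00] at h
    nlinarith [h]
  have ha : 0 ≤ m 1 1 - b1^2 := by
    have := key ![-b1, 1, 0, 0]; simp at this; nlinarith [this]
  have hb : 0 ≤ m 2 2 - b2^2 := by
    have := key ![-b2, 0, 1, 0]; simp at this; nlinarith [this]
  have hc : 0 ≤ m 3 3 - b3^2 := by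
    have := key ![-b3, 0, 0, 1]; simp at this; nlinarith [this]
  have hd : (m 1 2 - b1*b2)^2 ≤ (m 1 1 - b1^2)*(m 2 2 - b2^2) := by
    have hquad : ∀ t : ℝ, 0 ≤ (m 1 1 - b1^2) * (t*t) + (2*(m 1 2 - b1*b2)) * t + (m 2 2 - b2^2) := by
      intro t
      have := key ![-(b1*t+b2), t, 1, 0]
      simp at this
      nlinarith [this]
    have h := discrim_le_zero hquad
    rw [discrim] at h
    nlinarith [h]
  have he : (m 1 3 - b1*b3)^2 ≤ (m 1 1 - b1^2)*(m 3 3 - b3^2) := by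
    have hquad : ∀ t : ℝ, 0 ≤ (m 1 1 - b1^2) * (t*t) + (2*(m 1 3 - b1*b3)) * t + (m 3 3 - b3^2) := by
      intro t
      have := key ![-(b1*t+b3), t, 0, 1]
      simp at this
      nlinarith [this]
    have h := discrim_le_zero hquad
    rw [discrim] at h
    nlinarith [h]
  have hf : (m 2 3 - b2*b3)^2 ≤ (m 2 2 - b2^2)*(m 3 3 - b3^2) := by
    have hquad : ∀ t : ℝ, 0 ≤ (m 2 2 - b2^2) * (t*t) + (2*(m 2 3 - b2*b3)) * t + (m 3 3 - b3^2) := by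
      intro t
      have := key ![-(b2*t+b3), 0, t, 1]
      simp at this
      nlinarith [this]
    have h := discrim_le_zero hquad
    rw [discrim] at h
    nlinarith [h]
  have htrace : (m 1 1 - b1^2) + (m 2 2 - b2^2) + (m 3 3 - b3^2) ≤ 1 := by
    nlinarith [sq_nonneg b1, sq_nonneg b2, sq_nonneg b3]
  have hdet : (Matrix.of m).det = (m 1 1 - b1^2)*(m 2 2 - b2^2)*(m 3 3 - b3^2)
      + 2*(m 1 2 - b1*b2)*(m 1 3 - b1*b3)*(m 2 3 - b2*b3)
      - (m 1 1 - b1^2)*(m 2 3 - b2*b3)^2 - (m 2 2 - b2^2)*(m 1 3 - b1*b3)^2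
      - (m 3 3 - b3^2)*(m 1 2 - b1*b2)^2 := by
    rw [detFinFour]
    simp only [Matrix.of_apply]
    rw [hsym 1 0, hsym 2 0, hsym 3 0, hsym 2 1, hsym 3 1, hsym 3 2, h00, hb1, hb2, hb3]
    ring
  exact algBound _ _ _ _ _ _ _ ha hb hc hd he hf htrace hdet

lemma measurable_Phi (i : Fin 4) : Measurable fun x : Fin 3 → ℝ => Phi x i := by
  fin_cases i <;> simp [Phi] <;> first | exact measurable_const | exact measurable_pi_apply _

lemma integrable_dirac_of_measurable {f : (Fin 3 → ℝ) → ℝ} (hf : Measurable f)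
    (a : Fin 3 → ℝ) : Integrable f (Measure.dirac a) := by
  refine ⟨hf.aestronglyMeasurable, ?_⟩
  rw [HasFiniteIntegral, lintegral_dirac]
  exact ENNReal.coe_lt_top

/-- The general determinant bound for any probability measure supported on `S2`. -/
lemma detBound (μ : Measure (Fin 3 → ℝ)) (hp : IsProbabilityMeasure μ)
    (hs : μ S2ᶜ = 0) : (infoMatS2 μ).det ≤ 1/27 := by
  have hae : ∀ᵐ x ∂μ, x 0 ^ 2 + x 1 ^ 2 + x 2 ^ 2 = 1 := by
    rw [ae_iff]; exact hs
  have key3 : ∀ a b c : ℝ, a^2 + b^2 + c^2 = 1 → |a| ≤ 1 := fun a b c h =>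
    abs_le.mpr ⟨by nlinarith [sq_nonneg (a+1)], by nlinarith [sq_nonneg (a-1)]⟩
  have habs : ∀ᵐ x ∂μ, ∀ i, |Phi x i| ≤ 1 := by
    filter_upwards [hae] with x hx
    intro i
    fin_cases i <;> simp only [Phi, Matrix.cons_val_zero, Matrix.cons_val_one,
      Matrix.head_cons, Matrix.cons_val_two, Matrix.tail_cons, Matrix.cons_val_three]
    · norm_num
    · exact key3 _ _ _ hx
    · exact key3 (x 1) (x 0) (x 2) (by linarith)
    · exact key3 (x 2) (x 0) (x 1) (by linarith)
  have hint : ∀ i j, Integrable (fun x => Phi x i * Phi x j) μ := by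
    intro i j
    refine Integrable.mono' (integrable_const 1)
      (((measurable_Phi i).mul (measurable_Phi j)).aestronglyMeasurable) ?_
    filter_upwards [habs] with x hx
    rw [Real.norm_eq_abs, abs_mul]
    exact mul_le_one₀ (hx i) (abs_nonneg _) (hx j)
  have h00 : ∫ x, Phi x 0 * Phi x 0 ∂μ = 1 := by simp [Phi]
  have htr : (∫ x, Phi x 1 * Phi x 1 ∂μ) + (∫ x, Phi x 2 * Phi x 2 ∂μ)
      + (∫ x, Phi x 3 * Phi x 3 ∂μ) = 1 := by
    have e1 : ∑ k : Fin 3, ∫ x, Phi x k.succ * Phi x k.succ ∂μ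
        = ∫ x, ∑ k : Fin 3, Phi x k.succ * Phi x k.succ ∂μ :=
      (integral_finset_sum _ (fun k _ => hint _ _)).symm
    rw [Fin.sum_univ_three] at e1
    have e2 : ∫ x, ∑ k : Fin 3, Phi x k.succ * Phi x k.succ ∂μ = ∫ (_ : Fin 3 → ℝ), (1:ℝ) ∂μ := by
      apply integral_congr_ae
      filter_upwards [hae] with x hx
      rw [Fin.sum_univ_three]
      show Phi x 1 * Phi x 1 + Phi x 2 * Phi x 2 + Phi x 3 * Phi x 3 = 1
      simp only [Phi, Matrix.cons_val_one, Matrix.head_cons, Matrix.cons_val_two,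
        Matrix.tail_cons, Matrix.cons_val_three, Matrix.cons_val_zero]
      nlinarith [hx]
    have e3 : ∫ (_ : Fin 3 → ℝ), (1:ℝ) ∂μ = 1 := by simp
    have h1 : (Fin.succ 0 : Fin 4) = 1 := rfl
    have h2 : (Fin.succ 1 : Fin 4) = 2 := rfl
    have h3 : (Fin.succ 2 : Fin 4) = 3 := rfl
    rw [h1, h2, h3] at e1
    rw [e1, e2, e3]
  have hsym : ∀ i j : Fin 4, (∫ x, Phi x i * Phi x j ∂μ) = ∫ x, Phi x j * Phi x i ∂μ := by
    intro i j; simp_rw [mul_comm]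
  have hq : ∀ v : Fin 4 → ℝ, 0 ≤ ∑ i, ∑ j, v i * v j * ∫ x, Phi x i * Phi x j ∂μ := by
    intro v
    have step : ∀ i : Fin 4, ∑ j, v i * v j * ∫ x, Phi x i * Phi x j ∂μ
        = ∫ x, ∑ j, v i * v j * (Phi x i * Phi x j) ∂μ := by
      intro i
      rw [integral_finset_sum _ (fun j _ => ((hint i j).const_mul (v i * v j)))]
      exact Finset.sum_congr rfl fun j _ => (integral_const_mul _ _).symm
    calc (0:ℝ) ≤ ∫ x, (∑ i, v i * Phi x i)^2 ∂μ := integral_nonneg fun x => sq_nonneg _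
      _ = ∫ x, ∑ i, ∑ j, v i * v j * (Phi x i * Phi x j) ∂μ := by
          congr 1; ext x
          simp only [Fin.sum_univ_four]; ring
      _ = ∑ i, ∑ j, v i * v j * ∫ x, Phi x i * Phi x j ∂μ := by
          rw [integral_finset_sum _ (fun i _ =>
            integrable_finset_sum _ (fun j _ => ((hint i j).const_mul (v i * v j))))]
          exact Finset.sum_congr rfl fun i _ => (step i).symm
  exact coreDetBound (fun i j => ∫ x, Phi x i * Phi x j ∂μ) hsym h00 htr hq

/-- D-optimal design for linear regression on the sphere `S²`: the uniform probability
measure `μ₀` on the six points `(±1,0,0), (0,±1,0), (0,0,±1)` has information matrix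
`diag(1, 1/3, 1/3, 1/3)`, maximizes `det M(μ)` over probability measures on `S²`, and
the optimal value is `1/27`. -/
theorem d_optimal_design_sphere (μ0 : Measure (Fin 3 → ℝ))
    (hμ0 : μ0 = (6 : ℝ≥0∞)⁻¹ •
      ((∑ i : Fin 3, Measure.dirac (Pi.single i (1 : ℝ))) +
        ∑ i : Fin 3, Measure.dirac (-Pi.single i (1 : ℝ)))) :
    infoMatS2 μ0 = Matrix.diagonal ![1, 1/3, 1/3, 1/3] ∧
    (∀ μ : Measure (Fin 3 → ℝ), IsProbabilityMeasure μ → μ S2ᶜ = 0 →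
      (infoMatS2 μ).det ≤ (infoMatS2 μ0).det) ∧
    (infoMatS2 μ0).det = 1 / 27 := by
  have hentry : ∀ f : (Fin 3 → ℝ) → ℝ, Measurable f → ∫ x, f x ∂μ0
      = (1/6) * ((∑ k : Fin 3, f (Pi.single k 1)) + ∑ k : Fin 3, f (-Pi.single k 1)) := by
    intro f hf
    rw [hμ0, integral_smul_measure,
      integral_add_measure
        (integrable_finset_sum_measure.mpr fun k _ => integrable_dirac_of_measurable hf _)
        (integrable_finset_sum_measure.mpr fun k _ => integrable_dirac_of_measurable hf _),
      integral_finset_sum_measure (fun k _ => integrable_dirac_of_measurable hf _),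
      integral_finset_sum_measure (fun k _ => integrable_dirac_of_measurable hf _)]
    simp only [integral_dirac, smul_eq_mul]
    rw [ENNReal.toReal_inv]
    norm_num
  have hdiag : infoMatS2 μ0 = Matrix.diagonal ![1, 1/3, 1/3, 1/3] := by
    ext i j
    show (∫ x, Phi x i * Phi x j ∂μ0) = _
    rw [hentry (fun x => Phi x i * Phi x j) ((measurable_Phi i).mul (measurable_Phi j))]
    fin_cases i <;> fin_cases j <;>
      simp [Phi, Fin.sum_univ_three, Pi.single_apply, Matrix.diagonal] <;> norm_num
  have hdet0 : (infoMatS2 μ0).det = 1 / 27 := by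
    rw [hdiag, Matrix.det_diagonal, Fin.prod_univ_four]
    norm_num [Matrix.cons_val_two, Matrix.cons_val_three, Matrix.tail_cons, Matrix.head_cons]
  refine ⟨hdiag, ?_, hdet0⟩
  intro μ hp hs
  rw [hdet0]
  exact detBound μ hp hs
end
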